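/- Let M be an n×n symmetric negative definite matrix with nonnegative off-diagonal entries whose associated graph (edge between i ≠ j whenever M_{ij} > 0) is connected. Then the set S = {x ∈ ℤ^n : x ≠ 0 and M·x ≤ 0 componentwise} has a unique minimal element Z_min with respect to the componentwise partial order, and Z_min has all coordinates strictly positive. -/

import Mathlib

open Finset Matrix

section aux

variable {n : ℕ} (M : Matrix (Fin n) (Fin n) ℤ)

lemma negdef_int (hnegdef : (-(M.map (Int.cast : ℤ → ℝ))).PosDef)
    (z : Fin n → ℤ) (hz : 0 ≤ z ⬝ᵥ M.mulVec z) : z = 0 := by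
  by_contra h
  have hzr : (fun i => (z i : ℝ)) ≠ 0 := by
    intro h0
    apply h
    funext i
    have := congrFun h0 i
    simpa using this
  have hpos := hnegdef.dotProduct_mulVec_pos hzr
  have hstar : star (fun i => (z i : ℝ)) = fun i => (z i : ℝ) := by
    funext i; simp
  rw [hstar] at hpos
  have hcast : (fun i => (z i : ℝ)) ⬝ᵥ ((M.map (Int.cast : ℤ → ℝ)) *ᵥ (fun i => (z i : ℝ)))
      = ((z ⬝ᵥ M.mulVec z : ℤ) : ℝ) := by
    simp only [dotProduct, Matrix.mulVec, Matrix.map_apply]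
    push_cast
    ring
  rw [Matrix.neg_mulVec, dotProduct_neg, hcast] at hpos
  have : ((z ⬝ᵥ M.mulVec z : ℤ) : ℝ) < 0 := by linarith
  exact absurd hz (by exact_mod_cast not_le.mpr this)

end aux

section aux2

variable {n : ℕ} {M : Matrix (Fin n) (Fin n) ℤ}

lemma nonneg_of_mem (hnegdef : (-(M.map (Int.cast : ℤ → ℝ))).PosDef)
    (hoff : ∀ i j, i ≠ j → 0 ≤ M i j)
    (x : Fin n → ℤ) (hMx : ∀ i, M.mulVec x i ≤ 0) : ∀ i, 0 ≤ x i := by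
  set y : Fin n → ℤ := fun i => max (x i) 0 with hy
  set z : Fin n → ℤ := fun i => max (-(x i)) 0 with hzdef
  have hxyz : x = y - z := by funext i; simp only [Pi.sub_apply, hy, hzdef]; omega
  have hz0 : ∀ i, 0 ≤ z i := fun i => le_max_right _ _
  have hy0 : ∀ i, 0 ≤ y i := fun i => le_max_right _ _
  have hdisj : ∀ i, z i * y i = 0 := by
    intro i; simp only [hy, hzdef]
    rcases le_total (x i) 0 with h | h
    · rw [max_eq_right h]; ring
    · rw [max_eq_right (by omega : -(x i) ≤ 0)]; ring
  -- z ⬝ Mx ≤ 0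
  have h1 : z ⬝ᵥ M.mulVec x ≤ 0 := by
    apply Finset.sum_nonpos
    intro i _
    exact mul_nonpos_of_nonneg_of_nonpos (hz0 i) (hMx i)
  -- z ⬝ My ≥ 0
  have h2 : 0 ≤ z ⬝ᵥ M.mulVec y := by
    apply Finset.sum_nonneg
    intro i _
    simp only [Matrix.mulVec, dotProduct, Finset.mul_sum]
    apply Finset.sum_nonneg
    intro j _
    rcases eq_or_ne i j with rfl | hij
    · rw [show z i * (M i i * y i) = M i i * (z i * y i) by ring, hdisj i, mul_zero]
    · exact mul_nonneg (hz0 i) (mul_nonneg (hoff i j hij) (hy0 j))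
  have h3 : 0 ≤ z ⬝ᵥ M.mulVec z := by
    have : M.mulVec x = M.mulVec y - M.mulVec z := by
      rw [hxyz, Matrix.mulVec_sub]
    have h4 : z ⬝ᵥ M.mulVec x = z ⬝ᵥ M.mulVec y - z ⬝ᵥ M.mulVec z := by
      rw [this, dotProduct_sub]
    linarith
  have := negdef_int M hnegdef z h3
  intro i
  have := congrFun this i
  simp only [hzdef, Pi.zero_apply] at this
  omega

lemma pos_of_mem (hsymm : M.IsSymm)
    (hnegdef : (-(M.map (Int.cast : ℤ → ℝ))).PosDef)
    (hoff : ∀ i j, i ≠ j → 0 ≤ M i j)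
    (hconn : (SimpleGraph.fromRel (fun i j => 0 < M i j)).Connected)
    (x : Fin n → ℤ) (hx : x ≠ 0) (hMx : ∀ i, M.mulVec x i ≤ 0) : ∀ i, 0 < x i := by
  have hnn := nonneg_of_mem hnegdef hoff x hMx
  obtain ⟨i0, hi0⟩ : ∃ i, x i ≠ 0 := by
    by_contra h
    push_neg at h
    exact hx (funext h)
  have hi0' : 0 < x i0 := lt_of_le_of_ne (hnn i0) (Ne.symm hi0)
  -- step along edges
  have step : ∀ u v, (SimpleGraph.fromRel (fun i j => 0 < M i j)).Adj u v → 0 < x u → 0 < x v := by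
    intro u v huv hu
    obtain ⟨hne, h⟩ := huv
    have hMvu : 0 < M v u := by
      rcases h with h | h
      · have : M v u = M u v := by
          have := congrFun (congrFun hsymm.eq u) v
          simpa [Matrix.transpose_apply] using this
        omega
      · exact h
    by_contra hv
    have hxv : x v = 0 := le_antisymm (not_lt.mp hv) (hnn v)
    have hsum : 0 < M.mulVec x v := by
      simp only [Matrix.mulVec, dotProduct]
      have : ∀ j ∈ Finset.univ, 0 ≤ M v j * x j := by
        intro j _
        rcases eq_or_ne v j with rfl | hvj
        · rw [hxv, mul_zero]
        · exact mul_nonneg (hoff v j hvj) (hnn j)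
      calc (0:ℤ) < M v u * x u := mul_pos hMvu hu
        _ ≤ ∑ j, M v j * x j :=
          Finset.single_le_sum this (Finset.mem_univ u)
    exact absurd (hMx v) (not_le.mpr hsum)
  intro i
  obtain ⟨w⟩ := hconn i0 i
  clear hi0
  induction w with
  | nil => exact hi0'
  | cons h p ih => exact ih (step _ _ h hi0')

lemma min_closed (hoff : ∀ i j, i ≠ j → 0 ≤ M i j)
    (x y : Fin n → ℤ) (hx : ∀ i, M.mulVec x i ≤ 0) (hy : ∀ i, M.mulVec y i ≤ 0) :
    ∀ i, M.mulVec (x ⊓ y) i ≤ 0 := by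
  intro i
  have key : ∀ w : Fin n → ℤ, (∀ j, M.mulVec w j ≤ 0) → (x ⊓ y) i = w i →
      (∀ j, (x ⊓ y) j ≤ w j) → M.mulVec (x ⊓ y) i ≤ 0 := by
    intro w hw hi hle
    calc M.mulVec (x ⊓ y) i = ∑ j, M i j * (x ⊓ y) j := rfl
      _ ≤ ∑ j, M i j * w j := by
          apply Finset.sum_le_sum
          intro j _
          rcases eq_or_ne i j with rfl | hij
          · rw [hi]
          · exact mul_le_mul_of_nonneg_left (hle j) (hoff i j hij)
      _ = M.mulVec w i := rfl
      _ ≤ 0 := hw i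
  rcases le_total (x i) (y i) with h | h
  · exact key x hx (by simp [Pi.inf_apply, min_eq_left h]) (fun j => min_le_left _ _)
  · exact key y hy (by simp [Pi.inf_apply, min_eq_right h]) (fun j => min_le_right _ _)

end aux2

theorem fundamental_cycle_exists_unique {n : ℕ} (M : Matrix (Fin n) (Fin n) ℤ)
    (hsymm : M.IsSymm)
    (hnegdef : (-(M.map (Int.cast : ℤ → ℝ))).PosDef)
    (hoff : ∀ i j, i ≠ j → 0 ≤ M i j)
    (hconn : (SimpleGraph.fromRel (fun i j => 0 < M i j)).Connected)
    (hne : ∃ x : Fin n → ℤ, x ≠ 0 ∧ ∀ i, M.mulVec x i ≤ 0) :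
    (∃! Z : Fin n → ℤ, (Z ≠ 0 ∧ ∀ i, M.mulVec Z i ≤ 0) ∧
        ∀ x : Fin n → ℤ, (x ≠ 0 ∧ ∀ i, M.mulVec x i ≤ 0) → x ≤ Z → x = Z) ∧
      (∀ Z : Fin n → ℤ, ((Z ≠ 0 ∧ ∀ i, M.mulVec Z i ≤ 0) ∧
          ∀ x : Fin n → ℤ, (x ≠ 0 ∧ ∀ i, M.mulVec x i ≤ 0) → x ≤ Z → x = Z) →
        ∀ i, 0 < Z i) := by
  classical
  have hpos : ∀ x : Fin n → ℤ, x ≠ 0 → (∀ i, M.mulVec x i ≤ 0) → ∀ i, 0 < x i :=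
    fun x hx hMx => pos_of_mem hsymm hnegdef hoff hconn x hx hMx
  refine ⟨?_, fun Z hZ i => hpos Z hZ.1.1 hZ.1.2 i⟩
  obtain ⟨x₀, hx₀ne, hx₀⟩ := hne
  have hx₀pos := hpos x₀ hx₀ne hx₀
  have hFinNonempty : Nonempty (Fin n) := by
    by_contra h
    exact hx₀ne (funext fun i => absurd ⟨i⟩ h)
  -- the finite candidate set
  set T : Finset (Fin n → ℤ) :=
    (Finset.Icc (1 : Fin n → ℤ) x₀).filter (fun x => ∀ i, M.mulVec x i ≤ 0) with hT
  have hx₀T : x₀ ∈ T := by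
    rw [hT, Finset.mem_filter, Finset.mem_Icc]
    exact ⟨⟨fun i => hx₀pos i, le_refl _⟩, hx₀⟩
  have hTne : T.Nonempty := ⟨x₀, hx₀T⟩
  set Z := T.inf' hTne id with hZdef
  have hZmem : Z ∈ T := by
    apply Finset.inf'_mem (↑T : Set (Fin n → ℤ)) _ T hTne id (fun i hi => hi)
    intro a ha b hb
    simp only [Finset.coe_filter, Set.mem_setOf_eq, Finset.mem_Icc, hT] at ha hb ⊢
    refine ⟨⟨le_inf ha.1.1 hb.1.1, le_trans inf_le_left ha.1.2⟩, ?_⟩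
    exact min_closed hoff a b ha.2 hb.2
  have hZprop : (Z ≠ 0 ∧ ∀ i, M.mulVec Z i ≤ 0) := by
    rw [hT, Finset.mem_filter, Finset.mem_Icc] at hZmem
    constructor
    · intro h0
      obtain ⟨i⟩ := hFinNonempty
      have := hZmem.1.1 i
      rw [h0] at this
      simp at this
    · exact hZmem.2
  have hZle : ∀ x ∈ T, Z ≤ x := fun x hx => Finset.inf'_le id hx
  have hZmin : ∀ x : Fin n → ℤ, (x ≠ 0 ∧ ∀ i, M.mulVec x i ≤ 0) → x ≤ Z → x = Z := by
    intro x hx hxZ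
    have hxT : x ∈ T := by
      rw [hT, Finset.mem_filter, Finset.mem_Icc]
      exact ⟨⟨fun i => hpos x hx.1 hx.2 i, le_trans hxZ (hZle x₀ hx₀T)⟩, hx.2⟩
    exact le_antisymm hxZ (hZle x hxT)
  refine ⟨Z, ⟨hZprop, hZmin⟩, ?_⟩
  intro Z' ⟨hZ', hZ'min⟩
  set W := Z' ⊓ Z with hW
  have hWprop : (W ≠ 0 ∧ ∀ i, M.mulVec W i ≤ 0) := by
    constructor
    · intro h0
      obtain ⟨i⟩ := hFinNonempty
      have h1 := hpos Z' hZ'.1 hZ'.2 i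
      have h2 := hpos Z hZprop.1 hZprop.2 i
      have h3 : (0:ℤ) < W i := lt_min h1 h2
      rw [h0] at h3
      simp at h3
    · exact min_closed hoff Z' Z hZ'.2 hZprop.2
  have e1 : W = Z' := hZ'min W hWprop inf_le_left
  have e2 : W = Z := hZmin W hWprop inf_le_right
  rw [← e1, e2]
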